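/- Let G be a cubic graph containing an n-cycle C with n ≥ 7, let L assign each edge a list of at least 10 colors, and suppose G − V(C) has a strong L-edge-coloring φ. Then for each edge e of C, the number of colors of φ appearing on edges of G − V(C) at distance at most 2 from e is at most 4, and for each pendant edge f incident to C (joining a vertex of C to a vertex outside C), this number is at most 6; consequently the residual list of each cycle edge has size at least 6 and of each pendant edge at least 4. -/

import Mathlib

/-- The graph obtained from `G` by deleting the vertices of `S` (keeping the same vertex
type: all edges meeting `S` are removed). -/
def delVerts {V : Type*} (G : SimpleGraph V) (S : Set V) : SimpleGraph V where
  Adj u w := G.Adj u w ∧ u ∉ S ∧ w ∉ S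
  symm := ⟨fun u w ⟨h, hu, hw⟩ => ⟨h.symm, hw, hu⟩⟩
  loopless := ⟨fun u ⟨h, _, _⟩ => G.irrefl h⟩

/-- Two edges are at distance at most 2 in `G`: they share an endpoint or some edge of
`G` meets both. -/
def withinTwo {V : Type*} (G : SimpleGraph V) (e f : Sym2 V) : Prop :=
  (∃ v, v ∈ e ∧ v ∈ f) ∨
    ∃ g ∈ G.edgeSet, (∃ v, v ∈ e ∧ v ∈ g) ∧ (∃ v, v ∈ g ∧ v ∈ f)

/-- Two distinct edges of `G` conflict if they are at distance at most 2. -/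
def edgeConflict {V : Type*} (G : SimpleGraph V) (e f : Sym2 V) : Prop :=
  e ≠ f ∧ withinTwo G e f

/-- `φ` is a strong edge coloring of `G` from the lists `L`. -/
def IsStrongListColoring {V : Type*} (G : SimpleGraph V) (L : Sym2 V → Finset ℕ)
    (φ : Sym2 V → ℕ) : Prop :=
  (∀ e ∈ G.edgeSet, ∀ f ∈ G.edgeSet, edgeConflict G e f → φ e ≠ φ f) ∧
    ∀ e ∈ G.edgeSet, φ e ∈ L e

/-- `F_φ(e)`: the set of colors that `φ` gives to edges of `G'` at distance at most 2
from `e` in `G`. -/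
def Fcolors {V : Type*} (G G' : SimpleGraph V) (φ : Sym2 V → ℕ) (e : Sym2 V) : Set ℕ :=
  {c | ∃ e' ∈ G'.edgeSet, withinTwo G e e' ∧ φ e' = c}

open SimpleGraph

private lemma support_get?' {V : Type*} {G : SimpleGraph V} :
    ∀ {u v : V} (p : G.Walk u v) (n : ℕ), n ≤ p.length →
      p.support[n]? = some (p.getVert n)
  | _, _, .nil, 0, _ => rfl
  | _, _, .nil, n+1, h => by simp at h
  | _, _, .cons h p, 0, _ => by simp [SimpleGraph.Walk.getVert_zero]
  | _, _, .cons h p, n+1, hn => by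
      simp only [SimpleGraph.Walk.support_cons, List.getElem?_cons_succ,
        SimpleGraph.Walk.getVert_cons_succ]
      exact support_get?' p n (by simpa using hn)

private lemma cycle_two_nbrs {V : Type*} [DecidableEq V] {G : SimpleGraph V} {v x : V}
    {c : G.Walk v v} (hc : c.IsCycle) (hx : x ∈ c.support) :
    ∃ a b, a ≠ b ∧ G.Adj x a ∧ G.Adj x b ∧ a ∈ c.support ∧ b ∈ c.support := by
  set q := c.rotate x hx with hq
  have hqc : q.IsCycle := hc.rotate hx
  have hlen : 3 ≤ q.length := hqc.three_le_length
  have hmem : ∀ y, y ∈ q.support → y ∈ c.support := by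
    intro y hy
    rw [Walk.support_eq_cons] at hy
    rcases List.mem_cons.mp hy with rfl | hy
    · exact hx
    · exact List.mem_of_mem_tail ((Walk.support_rotate c x hx).mem_iff.mp hy)
  refine ⟨q.getVert 1, q.getVert (q.length - 1), ?_, ?_, ?_, ?_, ?_⟩
  · intro hab
    have h1 : q.support[1]? = some (q.getVert 1) := support_get?' q 1 (by omega)
    have h2 : q.support[q.length - 1]? = some (q.getVert (q.length - 1)) :=
      support_get?' q _ (by omega)
    have ht : q.support = x :: q.support.tail := Walk.support_eq_cons q
    have t1 : q.support.tail[0]? = some (q.getVert 1) := by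
      rw [ht] at h1; simpa using h1
    have t2 : q.support.tail[q.length - 2]? = some (q.getVert (q.length - 1)) := by
      have he2 : q.length - 1 = (q.length - 2) + 1 := by omega
      rw [ht] at h2
      rw [← h2, he2, List.getElem?_cons_succ]
    have hnd : q.support.tail.Nodup := hqc.support_nodup
    have hl : q.support.tail.length = q.length := by
      have h3 := Walk.length_support q
      rw [ht] at h3
      simpa using h3
    have h0 : (0:ℕ) < q.support.tail.length := by omega
    have := (List.getElem?_inj h0 hnd).mp (t1.trans (by rw [hab, ← t2]))
    omega
  · have h0 : (0:ℕ) < q.length := by omega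
    have := q.adj_getVert_succ h0
    simpa [Walk.getVert_zero] using this
  · have h0 : q.length - 1 < q.length := by omega
    have h1 := q.adj_getVert_succ h0
    have he : q.length - 1 + 1 = q.length := by omega
    rw [he, Walk.getVert_length] at h1
    exact h1.symm
  · exact hmem _ (Walk.mem_support_iff_exists_getVert.mpr ⟨1, rfl, by omega⟩)
  · exact hmem _ (Walk.mem_support_iff_exists_getVert.mpr ⟨q.length - 1, rfl, by omega⟩)

private lemma uniq_off {V : Type*} [Fintype V] [DecidableEq V] {G : SimpleGraph V}
    [DecidableRel G.Adj] (hcubic : ∀ v, G.degree v = 3) {v x : V} {c : G.Walk v v}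
    (hc : c.IsCycle) (hx : x ∈ c.support) {a b : V} (ha : G.Adj x a) (ha' : a ∉ c.support)
    (hb : G.Adj x b) (hb' : b ∉ c.support) : a = b := by
  by_contra hab
  obtain ⟨p, q, hpq, hp, hq, hps, hqs⟩ := cycle_two_nbrs hc hx
  have hpa : p ≠ a := fun h => ha' (h ▸ hps)
  have hpb : p ≠ b := fun h => hb' (h ▸ hps)
  have hqa : q ≠ a := fun h => ha' (h ▸ hqs)
  have hqb : q ≠ b := fun h => hb' (h ▸ hqs)
  have hsub : ({p, q, a, b} : Finset V) ⊆ G.neighborFinset x := by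
    intro z hz
    simp only [Finset.mem_insert, Finset.mem_singleton] at hz
    rcases hz with rfl | rfl | rfl | rfl <;> rw [SimpleGraph.mem_neighborFinset] <;>
      assumption
  have hcard : ({p, q, a, b} : Finset V).card = 4 := by
    rw [Finset.card_insert_of_notMem (by simp [hpq, hpa, hpb]),
      Finset.card_insert_of_notMem (by simp [hqa, hqb]),
      Finset.card_insert_of_notMem (by simp [hab]), Finset.card_singleton]
  have hle := Finset.card_le_card hsub
  rw [hcard, G.card_neighborFinset_eq_degree, hcubic x] at hle
  omega

private lemma delVerts_edge {V : Type*} {G : SimpleGraph V} {S : Set V} {e' : Sym2 V}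
    (he : e' ∈ (delVerts G S).edgeSet) {b : V} (hb : b ∈ e') :
    ∃ z, e' = s(b, z) ∧ G.Adj b z ∧ b ∉ S ∧ z ∉ S := by
  obtain ⟨z, rfl⟩ := Sym2.mem_iff_exists.mp hb
  have h : G.Adj b z ∧ b ∉ S ∧ z ∉ S := he
  exact ⟨z, rfl, h.1, h.2.1, h.2.2⟩

private lemma key_bound {V : Type*} [Fintype V] [DecidableEq V] {G : SimpleGraph V}
    [DecidableRel G.Adj] (hcubic : ∀ v, G.degree v = 3) {w t : V} (hwt : G.Adj w t)
    {B : Set (Sym2 V)} (hB : ∀ e' ∈ B, ∃ z, e' = s(w, z) ∧ G.Adj w z ∧ z ≠ t) :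
    B.ncard ≤ 2 := by
  have hsub : B ⊆ (fun z => s(w, z)) '' ((G.neighborFinset w : Set V) \ {t}) := by
    intro e' he
    obtain ⟨z, rfl, hz, hzt⟩ := hB e' he
    exact ⟨z, ⟨by simp [SimpleGraph.mem_neighborFinset, hz], hzt⟩, rfl⟩
  have h1 : B.ncard ≤ ((fun z => s(w, z)) '' ((G.neighborFinset w : Set V) \ {t})).ncard :=
    Set.ncard_le_ncard hsub (Set.toFinite _)
  have h2 := Set.ncard_image_le (s := (G.neighborFinset w : Set V) \ {t})
    (f := fun z => s(w, z)) (Set.toFinite _)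
  have h3 : ((G.neighborFinset w : Set V) \ {t}).ncard
      = (G.neighborFinset w : Set V).ncard - 1 :=
    Set.ncard_diff_singleton_of_mem (by simp [SimpleGraph.mem_neighborFinset, hwt])
  have h4 : (G.neighborFinset w : Set V).ncard = 3 := by
    rw [Set.ncard_coe_finset, G.card_neighborFinset_eq_degree, hcubic w]
  omega

private lemma Bx_bound {V : Type*} [Fintype V] [DecidableEq V] {G : SimpleGraph V}
    [DecidableRel G.Adj] (hcubic : ∀ v, G.degree v = 3) {v x : V} {c : G.Walk v v}
    (hc : c.IsCycle) (hx : x ∈ c.support) :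
    ({e' | e' ∈ (delVerts G {u | u ∈ c.support}).edgeSet ∧
      ∃ b, b ∈ e' ∧ G.Adj x b}).ncard ≤ 2 := by
  set B := {e' | e' ∈ (delVerts G {u | u ∈ c.support}).edgeSet ∧ ∃ b, b ∈ e' ∧ G.Adj x b}
    with hBdef
  rcases Set.eq_empty_or_nonempty B with hB | ⟨e₀, he₀, b₀, hb₀, hadj₀⟩
  · simp [hB]
  · have hb₀S : b₀ ∉ c.support := by
      obtain ⟨z, _, _, hbS, _⟩ := delVerts_edge he₀ hb₀
      exact hbS
    apply key_bound hcubic hadj₀.symm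
    rintro e' ⟨he', b, hb, hadjb⟩
    have hbS : b ∉ c.support := by
      obtain ⟨z, _, _, hbS, _⟩ := delVerts_edge he' hb
      exact hbS
    have hbb : b = b₀ := uniq_off hcubic hc hx hadjb hbS hadj₀ hb₀S
    subst hbb
    obtain ⟨z, rfl, hA, _, hzS⟩ := delVerts_edge he' hb
    exact ⟨z, rfl, hA, fun h => hzS (h ▸ hx)⟩

/-- Let `G` be a cubic graph containing a cycle `C` of length `n ≥ 7`, let `L` be a
10-edge list assignment, and let `φ` be a strong `L`-edge-coloring of `G - V(C)`.
Then for each cycle edge `e`, at most 4 colors of `φ` appear on edges of `G - V(C)` at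
distance at most 2 from `e` (so its residual list has at least 6 colors), and for each
pendant edge `uw` (with `u` on `C`, `w` off `C`), at most 6 such colors appear (so its
residual list has at least 4 colors). -/
theorem residual_list_sizes {V : Type*} [Fintype V] [DecidableEq V]
    (G : SimpleGraph V) [DecidableRel G.Adj] (hcubic : ∀ v, G.degree v = 3)
    (n : ℕ) (hn : 7 ≤ n) (v : V) (c : G.Walk v v) (hc : c.IsCycle) (hlen : c.length = n)
    (L : Sym2 V → Finset ℕ) (hL : ∀ e ∈ G.edgeSet, 10 ≤ (L e).card)
    (φ : Sym2 V → ℕ)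
    (hφ : IsStrongListColoring (delVerts G {u | u ∈ c.support}) L φ) :
    (∀ e ∈ c.edges,
        (Fcolors G (delVerts G {u | u ∈ c.support}) φ e).ncard ≤ 4 ∧
        6 ≤ ((L e : Set ℕ) \ Fcolors G (delVerts G {u | u ∈ c.support}) φ e).ncard) ∧
    (∀ u w, G.Adj u w → u ∈ c.support → w ∉ c.support →
        (Fcolors G (delVerts G {u | u ∈ c.support}) φ s(u, w)).ncard ≤ 6 ∧
        4 ≤ ((L s(u, w) : Set ℕ) \
              Fcolors G (delVerts G {u | u ∈ c.support}) φ s(u, w)).ncard) := by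
    classical
  set S : Set V := {u | u ∈ c.support} with hS
  set G' := delVerts G S with hG'
  have hFfin : ∀ e : Sym2 V, (Fcolors G G' φ e).Finite := by
    intro e
    have hsub : Fcolors G G' φ e ⊆ φ '' G'.edgeSet := by
      rintro col ⟨e', he', _, rfl⟩
      exact ⟨e', he', rfl⟩
    exact ((Set.toFinite _).image φ).subset hsub
  have hFsub : ∀ e : Sym2 V, ∀ B : Set (Sym2 V),
      (∀ e' ∈ G'.edgeSet, withinTwo G e e' → e' ∈ B) →
      (Fcolors G G' φ e).ncard ≤ B.ncard := by
    intro e B hB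
    have hsub : Fcolors G G' φ e ⊆ φ '' B := by
      rintro col ⟨e', he', hw, rfl⟩
      exact ⟨e', hB e' he' hw, rfl⟩
    calc (Fcolors G G' φ e).ncard ≤ (φ '' B).ncard :=
          Set.ncard_le_ncard hsub (Set.toFinite _)
      _ ≤ B.ncard := Set.ncard_image_le (Set.toFinite _)
  have resid : ∀ e : Sym2 V, e ∈ G.edgeSet → ∀ k : ℕ,
      (Fcolors G G' φ e).ncard ≤ k →
      10 - k ≤ ((L e : Set ℕ) \ Fcolors G G' φ e).ncard := by
    intro e he k hk
    have hA : (L e : Set ℕ) ⊆ ((L e : Set ℕ) \ Fcolors G G' φ e) ∪ Fcolors G G' φ e := by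
      intro a ha
      by_cases h : a ∈ Fcolors G G' φ e
      · exact Or.inr h
      · exact Or.inl ⟨ha, h⟩
    have h1 := Set.ncard_le_ncard hA (((Set.toFinite _).diff).union (hFfin e))
    have h2 := Set.ncard_union_le ((L e : Set ℕ) \ Fcolors G G' φ e) (Fcolors G G' φ e)
    rw [Set.ncard_coe_finset] at h1
    have h3 := hL e he
    omega
  constructor
  · intro e
    induction e using Sym2.ind with
    | _ x y =>
    intro he
    have hxS : x ∈ c.support := c.fst_mem_support_of_mem_edges he
    have hyS : y ∈ c.support := c.snd_mem_support_of_mem_edges he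
    have hGe : s(x, y) ∈ G.edgeSet := c.edges_subset_edgeSet he
    set Bx := {e' | e' ∈ G'.edgeSet ∧ ∃ b, b ∈ e' ∧ G.Adj x b} with hBx
    set By := {e' | e' ∈ G'.edgeSet ∧ ∃ b, b ∈ e' ∧ G.Adj y b} with hBy
    have hcov : ∀ e' ∈ G'.edgeSet, withinTwo G s(x, y) e' → e' ∈ Bx ∪ By := by
      intro e' he' hw
      rcases hw with ⟨z, hz1, hz2⟩ | ⟨g, hg, ⟨a, ha1, ha2⟩, ⟨b, hb1, hb2⟩⟩
      · obtain ⟨z', _, _, hzS, _⟩ := delVerts_edge he' hz2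
        rcases Sym2.mem_iff.mp hz1 with rfl | rfl
        · exact absurd hxS hzS
        · exact absurd hyS hzS
      · obtain ⟨z', _, _, hbS, _⟩ := delVerts_edge he' hb2
        have haS : a ∈ c.support := by
          rcases Sym2.mem_iff.mp ha1 with rfl | rfl
          · exact hxS
          · exact hyS
        have hab : a ≠ b := fun h => hbS (h ▸ haS)
        have hgab : g = s(a, b) := (Sym2.mem_and_mem_iff hab).mp ⟨ha2, hb1⟩
        have hadj : G.Adj a b := by rw [hgab] at hg; exact hg
        rcases Sym2.mem_iff.mp ha1 with rfl | rfl
        · exact Or.inl ⟨he', b, hb2, hadj⟩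
        · exact Or.inr ⟨he', b, hb2, hadj⟩
    have hcx : Bx.ncard ≤ 2 := Bx_bound hcubic hc hxS
    have hcy : By.ncard ≤ 2 := Bx_bound hcubic hc hyS
    have hF : (Fcolors G G' φ s(x, y)).ncard ≤ 4 := by
      have h1 := hFsub s(x, y) (Bx ∪ By) hcov
      have h2 := Set.ncard_union_le Bx By
      omega
    refine ⟨hF, ?_⟩
    have := resid s(x, y) hGe 4 hF
    omega
  · intro u w hadj huS hwS
    have hGe : s(u, w) ∈ G.edgeSet := G.mem_edgeSet.mpr hadj
    set B1 := {e' | e' ∈ G'.edgeSet ∧ w ∈ e'} with hB1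
    set B2 := {e' | e' ∈ G'.edgeSet ∧ w ∉ e' ∧ ∃ b, b ∈ e' ∧ G.Adj w b} with hB2
    have hcov : ∀ e' ∈ G'.edgeSet, withinTwo G s(u, w) e' → e' ∈ B1 ∪ B2 := by
      intro e' he' hw2
      have hvertS : ∀ b : V, b ∈ e' → b ∉ c.support := by
        intro b hb
        obtain ⟨z', _, _, hbS, _⟩ := delVerts_edge he' hb
        exact hbS
      rcases hw2 with ⟨z, hz1, hz2⟩ | ⟨g, hg, ⟨a, ha1, ha2⟩, ⟨b, hb1, hb2⟩⟩
      · rcases Sym2.mem_iff.mp hz1 with rfl | rfl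
        · exact absurd huS (hvertS _ hz2)
        · exact Or.inl ⟨he', hz2⟩
      · have hbS : b ∉ c.support := hvertS _ hb2
        rcases Sym2.mem_iff.mp ha1 with rfl | rfl
        · have hab : a ≠ b := fun h => hbS (h ▸ huS)
          have hgab : g = s(a, b) := (Sym2.mem_and_mem_iff hab).mp ⟨ha2, hb1⟩
          have hadjb : G.Adj a b := by rw [hgab] at hg; exact hg
          have hbw : b = w := uniq_off hcubic hc huS hadjb hbS hadj hwS
          exact Or.inl ⟨he', hbw ▸ hb2⟩
        · by_cases hwe : a ∈ e'
          · exact Or.inl ⟨he', hwe⟩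
          · have hab : a ≠ b := fun h => hwe (h ▸ hb2)
            have hgab : g = s(a, b) := (Sym2.mem_and_mem_iff hab).mp ⟨ha2, hb1⟩
            have hadjb : G.Adj a b := by rw [hgab] at hg; exact hg
            exact Or.inr ⟨he', hwe, b, hb2, hadjb⟩
    have hB1c : B1.ncard ≤ 2 := by
      apply key_bound hcubic hadj.symm
      rintro e' ⟨he', hwe⟩
      obtain ⟨z, rfl, hA, _, hzS⟩ := delVerts_edge he' hwe
      exact ⟨z, rfl, hA, fun h => hzS (h ▸ huS)⟩
    have hB2c : B2.ncard ≤ 4 := by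
      have hT : ((G.neighborFinset w).erase u).card = 2 := by
        rw [Finset.card_erase_of_mem ((G.mem_neighborFinset w u).mpr hadj.symm),
          G.card_neighborFinset_eq_degree, hcubic w]
      obtain ⟨z1, z2, hz12, hTeq⟩ := Finset.card_eq_two.mp hT
      have hmemT : ∀ b, G.Adj w b → b ∉ c.support → b = z1 ∨ b = z2 := by
        intro b hb hbS
        have hbu : b ≠ u := fun h => hbS (h ▸ huS)
        have hmem : b ∈ (G.neighborFinset w).erase u :=
          Finset.mem_erase.mpr ⟨hbu, (G.mem_neighborFinset w b).mpr hb⟩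
        rw [hTeq] at hmem
        simpa using hmem
      have hz1w : G.Adj z1 w := by
        have h1 : z1 ∈ (G.neighborFinset w).erase u := by
          rw [hTeq]; exact Finset.mem_insert_self _ _
        exact ((G.mem_neighborFinset w z1).mp (Finset.mem_of_mem_erase h1)).symm
      have hz2w : G.Adj z2 w := by
        have h1 : z2 ∈ (G.neighborFinset w).erase u := by
          rw [hTeq]; simp
        exact ((G.mem_neighborFinset w z2).mp (Finset.mem_of_mem_erase h1)).symm
      have hsub : B2 ⊆ {e' ∈ B2 | z1 ∈ e'} ∪ {e' ∈ B2 | z2 ∈ e'} := by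
        intro e' he'
        obtain ⟨hg', hwe, b, hb, hadjb⟩ := he'
        have hbS : b ∉ c.support := by
          obtain ⟨z', _, _, hbS, _⟩ := delVerts_edge hg' hb
          exact hbS
        rcases hmemT b hadjb hbS with rfl | rfl
        · exact Or.inl ⟨⟨hg', hwe, b, hb, hadjb⟩, hb⟩
        · exact Or.inr ⟨⟨hg', hwe, b, hb, hadjb⟩, hb⟩
      have hc1 : ({e' ∈ B2 | z1 ∈ e'}).ncard ≤ 2 := by
        apply key_bound hcubic hz1w
        rintro e' ⟨⟨hg', hwe, _⟩, hz⟩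
        obtain ⟨z, rfl, hA, _, _⟩ := delVerts_edge hg' hz
        exact ⟨z, rfl, hA, fun h => hwe (h ▸ Sym2.mem_mk_right z1 z)⟩
      have hc2 : ({e' ∈ B2 | z2 ∈ e'}).ncard ≤ 2 := by
        apply key_bound hcubic hz2w
        rintro e' ⟨⟨hg', hwe, _⟩, hz⟩
        obtain ⟨z, rfl, hA, _, _⟩ := delVerts_edge hg' hz
        exact ⟨z, rfl, hA, fun h => hwe (h ▸ Sym2.mem_mk_right z2 z)⟩
      have h1 := Set.ncard_le_ncard hsub (Set.toFinite _)
      have h2 := Set.ncard_union_le {e' ∈ B2 | z1 ∈ e'} {e' ∈ B2 | z2 ∈ e'}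
      omega
    have hF : (Fcolors G G' φ s(u, w)).ncard ≤ 6 := by
      have h1 := hFsub s(u, w) (B1 ∪ B2) hcov
      have h2 := Set.ncard_union_le B1 B2
      omega
    refine ⟨hF, ?_⟩
    have := resid s(u, w) hGe 6 hF
    omega
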